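/- Let 0 < p ≤ 1 and let E and F be p-normed spaces. Let T : E → F be a continuous map with T(0) = 0 which preserves equality of distance and satisfies 2·T(x) − T(y) ∈ T(E) for all x, y ∈ E. Then T is (real) linear. -/

import Mathlib

/-- For `0 < p ≤ 1`, a `p`-norm on a real vector space `E`: a non-negative function
`‖·‖` with `‖x‖ = 0` iff `x = 0`, `‖a • x‖ = |a|^p · ‖x‖` for all `a : ℝ`, and
`‖x + y‖ ≤ ‖x‖ + ‖y‖`.  A real vector space with a `p`-norm (and the induced metric
`d(x,y) = ‖x - y‖`) is a `p`-normed space. -/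
structure PNorm (p : ℝ) (E : Type*) [AddCommGroup E] [Module ℝ E] where
  toFun : E → ℝ
  nonneg : ∀ x, 0 ≤ toFun x
  eq_zero_iff : ∀ x, toFun x = 0 ↔ x = 0
  smul_eq : ∀ (a : ℝ) (x : E), toFun (a • x) = |a| ^ p * toFun x
  add_le : ∀ x y, toFun (x + y) ≤ toFun x + toFun y

namespace PNormAux

/-- Auxiliary structure: a bijection of `E` which is an isometry for a
pulled-back "distance" `d` and fixes the two points `u` and `z`. -/
structure MUAux {E : Type*} (d : E → E → ℝ) (u z : E) where
  f : E → E
  g : E → E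
  gf : ∀ v, g (f v) = v
  fg : ∀ v, f (g v) = v
  iso : ∀ a b, d (f a) (f b) = d a b
  hu : f u = u
  hz : f z = z

section basic

variable {p : ℝ} {F : Type*} [AddCommGroup F] [Module ℝ F] (ν : PNorm p F)

lemma zero' : ν.toFun 0 = 0 := (ν.eq_zero_iff 0).2 rfl

lemma neg' (v : F) : ν.toFun (-v) = ν.toFun v := by
  rw [← neg_one_smul ℝ v, ν.smul_eq]
  simp [Real.one_rpow]

lemma sub_comm' (a b : F) : ν.toFun (a - b) = ν.toFun (b - a) := by
  rw [← neg_sub a b, neg' ν]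

lemma pos' (v : F) (h : v ≠ 0) : 0 < ν.toFun v :=
  lt_of_le_of_ne (ν.nonneg v) (fun h0 => h ((ν.eq_zero_iff v).1 h0.symm))

lemma two_smul' (v : F) : ν.toFun ((2:ℝ) • v) = 2 ^ p * ν.toFun v := by
  rw [ν.smul_eq]; norm_num

lemma abs_sub_le' (a b : F) : |ν.toFun a - ν.toFun b| ≤ ν.toFun (a - b) := by
  rw [abs_sub_le_iff]
  constructor
  · have h1 := ν.add_le (a - b) b
    rw [sub_add_cancel] at h1
    linarith
  · have h1 := ν.add_le (b - a) a
    rw [sub_add_cancel] at h1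
    have h2 : ν.toFun (b - a) = ν.toFun (a - b) := sub_comm' ν b a
    linarith

end basic

lemma rpow_cancel {p : ℝ} (hp0 : 0 < p) {x : ℝ} (hx : 0 ≤ x) : (x ^ (1/p)) ^ p = x := by
  rw [← Real.rpow_mul hx (1/p) p, one_div_mul_cancel (ne_of_gt hp0), Real.rpow_one]

lemma one_lt_two_rpow {p : ℝ} (hp0 : 0 < p) : 1 < (2:ℝ) ^ p :=
  (Real.one_lt_rpow_iff_of_pos (by norm_num)).2 (Or.inl ⟨one_lt_two, hp0⟩)

lemma natpow_rpow (p : ℝ) (j : ℕ) : (((2:ℝ) ^ j)) ^ p = ((2:ℝ) ^ p) ^ j := by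
  rw [← Real.rpow_natCast (2:ℝ) j, ← Real.rpow_mul (by norm_num), mul_comm,
    Real.rpow_mul (by norm_num : (0:ℝ) ≤ 2), Real.rpow_natCast]

end PNormAux

open PNormAux

/-- **Corollary 2.3 (i).** Let `0 < p ≤ 1` and let `E, F` be `p`-normed spaces.
Let `T : E → F` be a continuous map with `T 0 = 0` which preserves equality of
distance and satisfies `2·Tx - Ty ∈ T(E)` for all `x, y ∈ E`.  Then `T` is linear. -/
theorem linear_of_preserves_equality_of_distance_pnormed
    {E F : Type*} [AddCommGroup E] [Module ℝ E] [AddCommGroup F] [Module ℝ F]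
    {p : ℝ} (hp0 : 0 < p) (hp1 : p ≤ 1)
    (νE : PNorm p E) (νF : PNorm p F)
    (T : E → F)
    (hcont : ∀ (x : E) (ε : ℝ), 0 < ε → ∃ δ : ℝ, 0 < δ ∧
      ∀ y : E, νE.toFun (y - x) < δ → νF.toFun (T y - T x) < ε)
    (hT0 : T 0 = 0)
    (hgauge : ∃ φ : ℝ → ℝ, (∀ t : ℝ, 0 ≤ t → 0 ≤ φ t) ∧
      ∀ x y : E, νF.toFun (T x - T y) = φ (νE.toFun (x - y)))
    (hrange : ∀ x y : E, (2 : ℝ) • T x - T y ∈ Set.range T) :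
    IsLinearMap ℝ T := by
  obtain ⟨φ, hφ0, hφ⟩ := hgauge
  have h2p1 : 1 < (2:ℝ) ^ p := one_lt_two_rpow hp0
  have hrange' : ∀ x y : E, ∃ w : E, T w = (2:ℝ) • T x - T y := fun x y => hrange x y
  by_cases hinj : ∀ a b : E, T a = T b → a = b
  · -- injective case
    set d : E → E → ℝ := fun a b => νF.toFun (T a - T b) with hd
    have dsymm : ∀ a b, d a b = d b a := by
      intro a b; simp only [hd]; exact sub_comm' νF _ _
    have dnonneg : ∀ a b, 0 ≤ d a b := by
      intro a b; simp only [hd]; exact νF.nonneg _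
    have dtri : ∀ a b c, d a c ≤ d a b + d b c := by
      intro a b c
      simp only [hd]
      have h1 : T a - T c = (T a - T b) + (T b - T c) := by abel
      rw [h1]
      exact νF.add_le _ _
    have dzero : ∀ a b, d a b = 0 → a = b := by
      intro a b h
      simp only [hd] at h
      exact hinj a b (sub_eq_zero.1 ((νF.eq_zero_iff _).1 h))
    -- Claim A
    have claimA : ∀ m u : E, T (m + m - u) = T m + T m - T u := by
      intro m u
      set τ : E → E := fun v => (hrange' m v).choose with hτdef
      have hτ : ∀ v, T (τ v) = (2:ℝ) • T m - T v := fun v => (hrange' m v).choose_spec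
      have τinv : ∀ v, τ (τ v) = v := by
        intro v
        apply hinj
        rw [hτ, hτ, sub_sub_cancel]
      have τm : τ m = m := by
        apply hinj
        rw [hτ, two_smul, add_sub_cancel_right]
      have dτiso : ∀ a b, d (τ a) (τ b) = d a b := by
        intro a b
        have h1 : T (τ a) - T (τ b) = T b - T a := by
          rw [hτ, hτ]
          exact sub_sub_sub_cancel_left (T a) (T b) ((2:ℝ) • T m)
        simp only [hd]
        rw [h1, ← neg_sub (T a) (T b), neg' νF]
      have dτ : ∀ v, d (τ v) v = (2:ℝ)^p * d m v := by
        intro v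
        have h1 : T (τ v) - T v = (2:ℝ) • (T m - T v) := by
          rw [hτ, two_smul, two_smul]
          abel
        simp only [hd]
        rw [h1, two_smul' νF]
      set z : E := τ u with hzdef
      have τu : τ u = z := hzdef.symm
      have τz : τ z = u := τinv u
      set σ : E → E := fun v => u + z - v with hσdef
      have σσ : ∀ v, σ (σ v) = v := by
        intro v; simp only [hσdef]; exact sub_sub_cancel _ _
      have dσiso : ∀ a b, d (σ a) (σ b) = d a b := by
        intro a b
        have h1 : σ a - σ b = b - a := by simp only [hσdef]; abel
        simp only [hd]
        rw [hφ (σ a) (σ b), hφ a b, h1, sub_comm' νE b a]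
      -- base bijection
      have hA0ex : ∃ A : MUAux d u z, A.f m = σ m := by
        refine ⟨⟨fun v => σ (τ v), fun v => τ (σ v), ?_, ?_, ?_, ?_, ?_⟩, ?_⟩
        · intro v
          show τ (σ (σ (τ v))) = v
          rw [σσ, τinv]
        · intro v
          show σ (τ (τ (σ v))) = v
          rw [τinv, σσ]
        · intro a b
          show d (σ (τ a)) (σ (τ b)) = d a b
          rw [dσiso, dτiso]
        · show σ (τ u) = u
          rw [τu]
          simp only [hσdef]
          rw [add_sub_cancel_right]
        · show σ (τ z) = z
          rw [τz]
          simp only [hσdef]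
          rw [add_sub_cancel_left]
        · show σ (τ m) = σ m
          rw [τm]
      obtain ⟨A0, hA0f⟩ := hA0ex
      -- the amplification step
      have step : ∀ A : MUAux d u z, ∃ B : MUAux d u z,
          d (B.f m) m = (2:ℝ)^p * d (A.f m) m := by
        intro A
        have giso : ∀ a b, d (A.g a) (A.g b) = d a b := by
          intro a b
          have h := A.iso (A.g a) (A.g b)
          rw [A.fg, A.fg] at h
          exact h.symm
        have gu : A.g u = u := by
          have h := A.gf u
          rw [A.hu] at h
          exact h
        have gz : A.g z = z := by
          have h := A.gf z
          rw [A.hz] at h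
          exact h
        refine ⟨⟨fun v => τ (A.g (τ (A.f v))), fun v => A.g (τ (A.f (τ v))),
            ?_, ?_, ?_, ?_, ?_⟩, ?_⟩
        · intro v
          show A.g (τ (A.f (τ (τ (A.g (τ (A.f v))))))) = v
          rw [τinv, A.fg, τinv, A.gf]
        · intro v
          show τ (A.g (τ (A.f (A.g (τ (A.f (τ v))))))) = v
          rw [A.fg, τinv, A.gf, τinv]
        · intro a b
          show d (τ (A.g (τ (A.f a)))) (τ (A.g (τ (A.f b)))) = d a b
          rw [dτiso, giso, dτiso, A.iso]
        · show τ (A.g (τ (A.f u))) = u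
          rw [A.hu, τu, gz, τz]
        · show τ (A.g (τ (A.f z))) = z
          rw [A.hz, τz, gu, τu]
        · show d (τ (A.g (τ (A.f m)))) m = (2:ℝ)^p * d (A.f m) m
          have e1 : d (τ (A.g (τ (A.f m)))) (τ m) = d (A.g (τ (A.f m))) m := dτiso _ _
          rw [τm] at e1
          have e2 : d (A.g (τ (A.f m))) (A.g (A.f m)) = d (τ (A.f m)) (A.f m) := giso _ _
          rw [A.gf m] at e2
          rw [e1, e2, dτ, dsymm m (A.f m)]
      -- iterate
      have iter : ∀ n : ℕ, ∃ A : MUAux d u z,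
          d (A.f m) m = ((2:ℝ)^p)^n * d (A0.f m) m := by
        intro n
        induction n with
        | zero => exact ⟨A0, by rw [pow_zero, one_mul]⟩
        | succ k ih =>
          obtain ⟨A, hA⟩ := ih
          obtain ⟨B, hB⟩ := step A
          exact ⟨B, by rw [hB, hA, pow_succ]; ring⟩
      -- uniform bound
      have bound : ∀ A : MUAux d u z, d (A.f m) m ≤ d m u + d u m := by
        intro A
        have h1 : d (A.f m) u = d m u := by
          have h := A.iso m u
          rw [A.hu] at h
          exact h
        calc d (A.f m) m ≤ d (A.f m) u + d u m := dtri _ _ _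
          _ = d m u + d u m := by rw [h1]
      -- conclude d (A0.f m) m = 0
      have d00 : d (A0.f m) m = 0 := by
        by_contra hne
        have dpos : 0 < d (A0.f m) m := lt_of_le_of_ne (dnonneg _ _) (Ne.symm hne)
        obtain ⟨n, hn⟩ := pow_unbounded_of_one_lt ((d m u + d u m) / d (A0.f m) m) h2p1
        obtain ⟨A, hA⟩ := iter n
        have h1 : d m u + d u m < ((2:ℝ)^p)^n * d (A0.f m) m :=
          (div_lt_iff₀ dpos).1 hn
        have h2 := bound A
        rw [hA] at h2
        linarith
      rw [hA0f] at d00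
      have hσm : σ m = m := dzero _ _ d00
      simp only [hσdef] at hσm
      have huz : u + z = m + m := by rw [sub_eq_iff_eq_add] at hσm; rw [hσm]
      have hzval : z = m + m - u := by rw [← huz, add_sub_cancel_left]
      rw [← hzval]
      rw [hτ u, two_smul]
    -- additivity
    have hadd : ∀ x y : E, T (x + y) = T x + T y := by
      intro x y
      set m : E := (2⁻¹ : ℝ) • (x + y) with hm
      have hmm : m + m = x + y := by
        rw [hm, ← add_smul]
        norm_num
      have h1 := claimA m y
      have h2 := claimA m 0
      rw [hmm, add_sub_cancel_right] at h1
      rw [sub_zero, hT0, sub_zero, hmm] at h2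
      rw [h2, h1, sub_add_cancel]
    have hneg : ∀ x : E, T (-x) = - T x := by
      intro x
      have h := hadd x (-x)
      rw [add_neg_cancel, hT0] at h
      exact (neg_eq_of_add_eq_zero_right h.symm).symm
    have hnat : ∀ (n : ℕ) (x : E), T ((n:ℝ) • x) = (n:ℝ) • T x := by
      intro n
      induction n with
      | zero => intro x; simp [hT0]
      | succ k ih =>
        intro x
        push_cast
        rw [add_smul, one_smul, hadd, ih, add_smul, one_smul]
    have hint : ∀ (k : ℤ) (x : E), T ((k:ℝ) • x) = (k:ℝ) • T x := by
      intro k x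
      cases k with
      | ofNat n =>
        show T (((n:ℤ):ℝ) • x) = ((n:ℤ):ℝ) • T x
        rw [Int.cast_natCast]; exact hnat n x
      | negSucc n =>
        have hc : ((Int.negSucc n : ℤ) : ℝ) = -((n+1 : ℕ) : ℝ) := by
          push_cast; ring
        rw [hc, neg_smul, hneg, hnat, neg_smul]
    have hhalf : ∀ x : E, T ((2⁻¹:ℝ) • x) = (2⁻¹:ℝ) • T x := by
      intro x
      have hx : (2⁻¹:ℝ) • x + (2⁻¹:ℝ) • x = x := by
        rw [← add_smul]; norm_num
      have h1 : T x = T ((2⁻¹:ℝ) • x) + T ((2⁻¹:ℝ) • x) := by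
        rw [← hadd, hx]
      have h2 : (2⁻¹:ℝ) • T x = (2⁻¹:ℝ) • ((2:ℝ) • T ((2⁻¹:ℝ) • x)) := by
        rw [h1, two_smul]
      rw [h2, smul_smul]
      norm_num
    have hhpow : ∀ (j : ℕ) (x : E), T (((2:ℝ)⁻¹ ^ j) • x) = ((2:ℝ)⁻¹ ^ j) • T x := by
      intro j
      induction j with
      | zero => intro x; simp
      | succ k ih =>
        intro x
        rw [pow_succ, mul_smul, ih, hhalf, ← mul_smul, ← pow_succ]
    have hdyadic : ∀ (k : ℤ) (j : ℕ) (x : E),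
        T (((k:ℝ) * (2:ℝ)⁻¹ ^ j) • x) = ((k:ℝ) * (2:ℝ)⁻¹ ^ j) • T x := by
      intro k j x
      rw [mul_comm, mul_smul, hhpow, hint, ← mul_smul, mul_comm]
    -- real homogeneity
    have hsmul : ∀ (c : ℝ) (x : E), T (c • x) = c • T x := by
      intro c x
      have hS0 : νF.toFun (T (c • x) - c • T x) = 0 := by
        by_contra hne
        set S := νF.toFun (T (c • x) - c • T x) with hSdef
        have hS : 0 < S := lt_of_le_of_ne (νF.nonneg _) (Ne.symm hne)
        obtain ⟨δ, hδpos, hδ⟩ := hcont (c • x) (S/2) (by positivity)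
        have hνx1 : (0:ℝ) < νE.toFun x + 1 := by have := νE.nonneg x; linarith
        have hνTx1 : (0:ℝ) < νF.toFun (T x) + 1 := by have := νF.nonneg (T x); linarith
        set η₁ : ℝ := (δ / (νE.toFun x + 1)) ^ (1/p) with hη₁
        set η₂ : ℝ := ((S/2) / (νF.toFun (T x) + 1)) ^ (1/p) with hη₂
        have hη₁pos : 0 < η₁ := Real.rpow_pos_of_pos (by positivity) _
        have hη₂pos : 0 < η₂ := Real.rpow_pos_of_pos (by positivity) _
        set η := min η₁ η₂ with hη
        have hηpos : 0 < η := lt_min hη₁pos hη₂pos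
        obtain ⟨j, hj⟩ := exists_pow_lt_of_lt_one hηpos (by norm_num : (2:ℝ)⁻¹ < 1)
        set k : ℤ := ⌊c * 2 ^ j⌋ with hk
        set r : ℝ := (k:ℝ) * (2:ℝ)⁻¹ ^ j with hr
        have h2j : (0:ℝ) < 2 ^ j := by positivity
        have hrdiv : r = (k:ℝ) / 2^j := by rw [hr, inv_pow]; ring
        have hfl1 : (k:ℝ) ≤ c * 2 ^ j := Int.floor_le _
        have hfl2 : c * 2 ^ j - 1 < (k:ℝ) := Int.sub_one_lt_floor _
        have hrle : r ≤ c := by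
          rw [hrdiv]
          exact (div_le_iff₀ h2j).2 hfl1
        have hlt : c < ((k:ℝ)+1) / 2^j := (lt_div_iff₀ h2j).2 (by linarith)
        have hgap : ((k:ℝ)+1)/2^j - (k:ℝ)/2^j = (2:ℝ)⁻¹ ^ j := by
          rw [div_sub_div_same, inv_pow]
          norm_num [one_div]
        have hrc : |r - c| < η := by
          have h1 : |r - c| = c - r := by
            rw [abs_sub_comm, abs_of_nonneg (by linarith)]
          rw [h1]
          have h2 : c - r < (2:ℝ)⁻¹ ^ j := by
            rw [hrdiv, ← hgap]
            linarith
          linarith [hj]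
        have hrcp : ∀ M : ℝ, 0 ≤ M → |r - c| < M ^ (1/p) → |r - c| ^ p < M := by
          intro M hM hltM
          have h := Real.rpow_lt_rpow (abs_nonneg (r - c)) hltM hp0
          rwa [rpow_cancel hp0 hM] at h
        have hest1 : νF.toFun (T (r • x) - T (c • x)) < S/2 := by
          apply hδ
          have h1 : r • x - c • x = (r - c) • x := (sub_smul r c x).symm
          rw [h1, νE.smul_eq]
          have h2 : |r - c| ^ p < δ / (νE.toFun x + 1) := by
            apply hrcp _ (by positivity)
            exact lt_of_lt_of_le hrc (min_le_left _ _)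
          calc |r - c| ^ p * νE.toFun x ≤ |r - c| ^ p * (νE.toFun x + 1) :=
              mul_le_mul_of_nonneg_left (by linarith [νE.nonneg x])
                (Real.rpow_nonneg (abs_nonneg _) _)
            _ < (δ / (νE.toFun x + 1)) * (νE.toFun x + 1) :=
              mul_lt_mul_of_pos_right h2 hνx1
            _ = δ := div_mul_cancel₀ _ (ne_of_gt hνx1)
        have hest2 : νF.toFun (r • T x - c • T x) < S/2 := by
          have h1 : r • T x - c • T x = (r - c) • T x := (sub_smul r c (T x)).symm
          rw [h1, νF.smul_eq]
          have h2 : |r - c| ^ p < (S/2) / (νF.toFun (T x) + 1) := by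
            apply hrcp _ (by positivity)
            exact lt_of_lt_of_le hrc (min_le_right _ _)
          calc |r - c| ^ p * νF.toFun (T x) ≤ |r - c| ^ p * (νF.toFun (T x) + 1) :=
              mul_le_mul_of_nonneg_left (by linarith [νF.nonneg (T x)])
                (Real.rpow_nonneg (abs_nonneg _) _)
            _ < ((S/2) / (νF.toFun (T x) + 1)) * (νF.toFun (T x) + 1) :=
              mul_lt_mul_of_pos_right h2 hνTx1
            _ = S/2 := div_mul_cancel₀ _ (ne_of_gt hνTx1)
        have hTr : T (r • x) = r • T x := hdyadic k j x
        have htri : S ≤ νF.toFun (T (c • x) - T (r • x)) + νF.toFun (T (r • x) - c • T x) := by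
          have h1 : T (c • x) - c • T x =
              (T (c • x) - T (r • x)) + (T (r • x) - c • T x) := by abel
          rw [hSdef, h1]
          exact νF.add_le _ _
        have hsy : νF.toFun (T (c • x) - T (r • x)) = νF.toFun (T (r • x) - T (c • x)) :=
          sub_comm' νF _ _
        rw [hTr] at hest1
        rw [hsy, hTr] at htri
        linarith
      exact sub_eq_zero.1 ((νF.eq_zero_iff _).1 hS0)
    exact ⟨hadd, fun c x => hsmul c x⟩
  · -- non-injective case : T ≡ 0
    push_neg at hinj
    obtain ⟨a, b, hab, hne⟩ := hinj
    set t₀ : ℝ := νE.toFun (a - b) with ht₀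
    have ht₀pos : 0 < t₀ := pos' νE _ (sub_ne_zero.2 hne)
    have hφt₀ : φ t₀ = 0 := by
      rw [ht₀, ← hφ a b, sub_eq_zero.2 hab, zero' νF]
    have key : ∀ u v : E, νE.toFun (u - v) = t₀ → T u = T v := by
      intro u v h
      have h1 : νF.toFun (T u - T v) = 0 := by rw [hφ u v, h, hφt₀]
      exact sub_eq_zero.1 ((νF.eq_zero_iff _).1 h1)
    have hzero : ∀ w : E, T w = 0 := by
      intro w
      by_contra hw
      have hw0 : w ≠ 0 := fun h => hw (h ▸ hT0)
      have hνw : 0 < νE.toFun w := pos' νE w hw0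
      set c₀ : ℝ := (t₀ / νE.toFun w) ^ (1/p) with hc₀
      have hc₀pos : 0 < c₀ := Real.rpow_pos_of_pos (by positivity) _
      have hsmulw : ∀ s : ℝ, 0 ≤ s → νE.toFun (s • w) = s ^ p * νE.toFun w := by
        intro s hs
        rw [νE.smul_eq, abs_of_nonneg hs]
      have hc₀w : νE.toFun (c₀ • w) = t₀ := by
        rw [hsmulw c₀ hc₀pos.le, hc₀, rpow_cancel hp0 (by positivity),
          div_mul_cancel₀ _ (ne_of_gt hνw)]
      have hper : ∀ u : E, T (u + c₀ • w) = T u := by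
        intro u
        apply key
        rw [add_sub_cancel_left]
        exact hc₀w
      have hpern : ∀ (n : ℕ) (s : ℝ), T ((s + n * c₀) • w) = T (s • w) := by
        intro n
        induction n with
        | zero =>
          intro s
          have h : s + (0:ℕ) * c₀ = s := by norm_num
          rw [h]
        | succ k ih =>
          intro s
          have h1 : (s + ((k+1 : ℕ):ℝ) * c₀) = (s + (k:ℝ) * c₀) + c₀ := by push_cast; ring
          rw [h1, add_smul, hper, ih]
      set g : ℝ → ℝ := fun s => νF.toFun (T (s • w)) with hg
      have gcont : Continuous g := by
        rw [Metric.continuous_iff]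
        intro s₀ ε hε
        obtain ⟨δ, hδpos, hδ⟩ := hcont (s₀ • w) ε hε
        have hνw1 : (0:ℝ) < νE.toFun w + 1 := by linarith
        refine ⟨(δ / (νE.toFun w + 1)) ^ (1/p), Real.rpow_pos_of_pos (by positivity) _, ?_⟩
        intro s hs
        rw [Real.dist_eq] at hs ⊢
        have h1 : νE.toFun (s • w - s₀ • w) < δ := by
          rw [← sub_smul, νE.smul_eq]
          have h2 : |s - s₀| ^ p < δ / (νE.toFun w + 1) := by
            have h := Real.rpow_lt_rpow (abs_nonneg (s - s₀)) hs hp0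
            rwa [rpow_cancel hp0 (by positivity)] at h
          calc |s - s₀| ^ p * νE.toFun w ≤ |s - s₀| ^ p * (νE.toFun w + 1) :=
              mul_le_mul_of_nonneg_left (by linarith [νE.nonneg w])
                (Real.rpow_nonneg (abs_nonneg _) _)
            _ < (δ / (νE.toFun w + 1)) * (νE.toFun w + 1) := mul_lt_mul_of_pos_right h2 hνw1
            _ = δ := div_mul_cancel₀ _ (ne_of_gt hνw1)
        have h3 := hδ (s • w) h1
        simp only [hg]
        calc |νF.toFun (T (s • w)) - νF.toFun (T (s₀ • w))|
            ≤ νF.toFun (T (s • w) - T (s₀ • w)) := abs_sub_le' νF _ _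
          _ < ε := h3
      obtain ⟨smax, hsmem, hsmax⟩ :=
        (isCompact_Icc (a := (0:ℝ)) (b := c₀)).exists_isMaxOn
          ⟨0, Set.mem_Icc.mpr ⟨le_rfl, hc₀pos.le⟩⟩ gcont.continuousOn
      set M : ℝ := g smax with hM
      have hgM : ∀ s : ℝ, 0 ≤ s → g s ≤ M := by
        intro s hs
        set n : ℕ := ⌊s / c₀⌋₊ with hn
        have h1 : (n:ℝ) * c₀ ≤ s := by
          rw [← le_div_iff₀ hc₀pos]
          exact Nat.floor_le (div_nonneg hs hc₀pos.le)
        have h2 : s < ((n:ℝ) + 1) * c₀ := by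
          have h := Nat.lt_succ_floor (s / c₀)
          push_cast at h
          rw [div_lt_iff₀ hc₀pos] at h
          linarith
        set rr : ℝ := s - n * c₀ with hrr
        have hrr0 : 0 ≤ rr := by rw [hrr]; linarith
        have hrrc : rr ≤ c₀ := by rw [hrr]; nlinarith
        have hgs : g s = g rr := by
          simp only [hg]
          have hs' : s = rr + (n:ℝ) * c₀ := by rw [hrr]; ring
          rw [hs', hpern n rr]
        rw [hgs]
        exact hsmax (Set.mem_Icc.mpr ⟨hrr0, hrrc⟩)
      have hφle : ∀ t : ℝ, 0 ≤ t → φ t ≤ M := by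
        intro t ht
        set s : ℝ := (t / νE.toFun w) ^ (1/p) with hsdef
        have hs0 : 0 ≤ s := Real.rpow_nonneg (by positivity) _
        have h1 : νE.toFun (s • w) = t := by
          rw [hsmulw s hs0, hsdef, rpow_cancel hp0 (by positivity),
            div_mul_cancel₀ _ (ne_of_gt hνw)]
        have e := hφ (s • w) 0
        rw [hT0, sub_zero, sub_zero, h1] at e
        have h2 : φ t = g s := by simp only [hg]; exact e.symm
        rw [h2]
        exact hgM s hs0
      have hzn : ∀ n : ℕ, ∃ zn : E, T zn = (n:ℝ) • T w := by
        have hpair : ∀ n : ℕ, ∃ a' b' : E, T a' = (n:ℝ) • T w ∧ T b' = ((n:ℝ)+1) • T w := by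
          intro n
          induction n with
          | zero => exact ⟨0, w, by simp [hT0], by simp⟩
          | succ k ih =>
            obtain ⟨a', b', ha', hb'⟩ := ih
            obtain ⟨c', hc'⟩ := hrange' b' a'
            refine ⟨b', c', by push_cast; rw [hb'], ?_⟩
            rw [hc', ha', hb', smul_smul, ← sub_smul]
            push_cast
            congr 1
            ring
        intro n
        obtain ⟨a', _, ha', _⟩ := hpair n
        exact ⟨a', ha'⟩
      have hTw : 0 < νF.toFun (T w) := pos' νF _ hw
      obtain ⟨j, hj⟩ := pow_unbounded_of_one_lt (M / νF.toFun (T w)) h2p1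
      obtain ⟨zn, hznval⟩ := hzn (2^j)
      have h1 : νF.toFun (T zn) = ((2:ℝ)^p)^j * νF.toFun (T w) := by
        rw [hznval, νF.smul_eq]
        have habs : |((2^j : ℕ) : ℝ)| = (2:ℝ)^j := by
          push_cast
          exact abs_of_nonneg (by positivity)
        rw [habs, natpow_rpow]
      have h2 : νF.toFun (T zn) = φ (νE.toFun zn) := by
        have e := hφ zn 0
        rw [hT0, sub_zero, sub_zero] at e
        exact e
      have h3 : φ (νE.toFun zn) ≤ M := hφle _ (νE.nonneg _)
      have h4 : M < ((2:ℝ)^p)^j * νF.toFun (T w) := (div_lt_iff₀ hTw).1 hj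
      rw [h2] at h1
      linarith
    constructor
    · intro x y; rw [hzero, hzero, hzero, add_zero]
    · intro c x; rw [hzero, hzero, smul_zero]
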